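/- arXiv:2303.15529 — 3 statements merged into one kernel-verified Lean document; each statement's English description precedes it below -/
import Mathlib

section
/- Let e(t) denote the largest number of edges in a layered graph on t vertices. Then e(t) ≤ (1/2)·t·log₂(t)·(1+o(1)); that is, for every ε > 0 there exists t₀ such that every layered graph on t ≥ t₀ vertices has at most ((1+ε)/2)·t·log₂(t) edges. -/
open SimpleGraph

section Aux

open Finset

variable {α : Type*} [DecidableEq α]

def cubeAdj (A B : Finset α) : Prop :=
  (A ⊆ B ∧ B.card = A.card + 1) ∨ (B ⊆ A ∧ A.card = B.card + 1)

instance (A B : Finset α) : Decidable (cubeAdj A B) := by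
  unfold cubeAdj; infer_instance

def pairCount (S : Finset (Finset α)) : ℕ :=
  ((S ×ˢ S).filter fun p => cubeAdj p.1 p.2).card

lemma log_one_add_ge {x : ℝ} (h0 : 0 ≤ x) (h1 : x ≤ 1) :
    x * Real.log 2 ≤ Real.log (1 + x) := by
  have hc := strictConcaveOn_log_Ioi.concaveOn
  have h := hc.2 (show (1:ℝ) ∈ Set.Ioi 0 by norm_num)
    (show (2:ℝ) ∈ Set.Ioi 0 by norm_num)
    (show (0:ℝ) ≤ 1 - x by linarith) h0 (show (1-x) + x = 1 by ring)
  simp only [smul_eq_mul, mul_one, Real.log_one, mul_zero, zero_add] at h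
  rw [show (1:ℝ) - x + x * 2 = 1 + x by ring] at h
  linarith

lemma key_log (a b : ℕ) (ha : 1 ≤ a) (hab : a ≤ b) :
    (a : ℝ) * Real.log a + b * Real.log b + 2 * a * Real.log 2
      ≤ ((a : ℝ) + b) * Real.log ((a : ℝ) + b) := by
  have ha' : (0:ℝ) < a := by exact_mod_cast ha
  have hb' : (0:ℝ) < b := lt_of_lt_of_le ha' (by exact_mod_cast hab)
  have hab' : (a:ℝ) ≤ b := by exact_mod_cast hab
  have h1 : (a:ℝ) * Real.log 2 ≤ a * (Real.log ((a:ℝ)+b) - Real.log a) := by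
    have : Real.log 2 + Real.log a ≤ Real.log ((a:ℝ)+b) := by
      rw [← Real.log_mul (by norm_num) (ne_of_gt ha')]
      exact Real.log_le_log (by linarith) (by linarith)
    nlinarith
  have h2 : (a:ℝ) * Real.log 2 ≤ b * (Real.log ((a:ℝ)+b) - Real.log b) := by
    have hx0 : (0:ℝ) ≤ a / b := by positivity
    have hx1 : (a:ℝ) / b ≤ 1 := by rw [div_le_one hb']; exact hab'
    have hl := log_one_add_ge hx0 hx1
    have heq : Real.log (1 + (a:ℝ)/b) = Real.log ((a:ℝ)+b) - Real.log b := by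
      have h' : (1:ℝ) + (a:ℝ)/b = ((a:ℝ)+b)/b := by field_simp; ring
      rw [h', Real.log_div (by positivity) (ne_of_gt hb')]
    rw [heq] at hl
    have := mul_le_mul_of_nonneg_left hl hb'.le
    calc (a:ℝ) * Real.log 2 = b * ((a:ℝ)/b * Real.log 2) := by field_simp
      _ ≤ b * (Real.log ((a:ℝ)+b) - Real.log b) := this
  nlinarith

lemma key_ineq (a b : ℕ) :
    (a : ℝ) * Real.logb 2 a + b * Real.logb 2 b + 2 * (min a b : ℕ)
      ≤ ((a : ℝ) + b) * Real.logb 2 ((a : ℝ) + b) := by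
  have hl2 : (0:ℝ) < Real.log 2 := Real.log_pos (by norm_num)
  have main : ∀ a b : ℕ, a ≤ b →
      (a : ℝ) * Real.logb 2 a + b * Real.logb 2 b + 2 * a
        ≤ ((a : ℝ) + b) * Real.logb 2 ((a : ℝ) + b) := by
    intro a b hab
    rcases Nat.eq_zero_or_pos a with rfl | ha
    · simp
    have h := key_log a b ha hab
    simp only [Real.logb]
    calc (a:ℝ) * (Real.log a / Real.log 2) + b * (Real.log b / Real.log 2) + 2 * a
        = ((a:ℝ) * Real.log a + b * Real.log b + 2 * a * Real.log 2) / Real.log 2 := by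
          field_simp
      _ ≤ (((a:ℝ) + b) * Real.log ((a:ℝ)+b)) / Real.log 2 := by gcongr
      _ = ((a:ℝ) + b) * (Real.log ((a:ℝ)+b) / Real.log 2) := by ring
  rcases le_total a b with h | h
  · rw [min_eq_left h]; exact main a b h
  · rw [min_eq_right h]
    have := main b a h
    rw [add_comm (b:ℝ) (a:ℝ)] at this
    linarith [this]

lemma cross_insert {x : α} {A B : Finset α} (hA : x ∉ A) (hB : x ∈ B)
    (h : cubeAdj A B) : B = insert x A := by
  rcases h with ⟨hsub, hc⟩ | ⟨hsub, hc⟩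
  · refine (Finset.eq_of_subset_of_card_le (Finset.insert_subset hB hsub) ?_).symm
    rw [Finset.card_insert_of_notMem hA]; omega
  · exact absurd (hsub hB) hA

lemma cross_card_le {x : α} (S₀ S₁ : Finset (Finset α))
    (h₀ : ∀ A ∈ S₀, x ∉ A) (h₁ : ∀ B ∈ S₁, x ∈ B) :
    ((S₀ ×ˢ S₁).filter fun p => cubeAdj p.1 p.2).card ≤ min S₀.card S₁.card := by
  apply le_min
  · apply Finset.card_le_card_of_injOn Prod.fst
    · intro p hp
      simp only [Finset.mem_coe, Finset.mem_filter, Finset.mem_product] at hp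
      exact hp.1.1
    · intro p hp q hq hpq
      simp only [Finset.mem_coe, Finset.mem_filter, Finset.mem_product] at hp hq
      have e1 : p.2 = insert x p.1 := cross_insert (h₀ _ hp.1.1) (h₁ _ hp.1.2) hp.2
      have e2 : q.2 = insert x q.1 := cross_insert (h₀ _ hq.1.1) (h₁ _ hq.1.2) hq.2
      exact Prod.ext hpq (by rw [e1, e2, hpq])
  · apply Finset.card_le_card_of_injOn Prod.snd
    · intro p hp
      simp only [Finset.mem_coe, Finset.mem_filter, Finset.mem_product] at hp
      exact hp.1.2
    · intro p hp q hq hpq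
      simp only [Finset.mem_coe, Finset.mem_filter, Finset.mem_product] at hp hq
      have e1 : p.2 = insert x p.1 := cross_insert (h₀ _ hp.1.1) (h₁ _ hp.1.2) hp.2
      have e2 : q.2 = insert x q.1 := cross_insert (h₀ _ hq.1.1) (h₁ _ hq.1.2) hq.2
      have f1 : p.1 = p.2.erase x := by rw [e1, Finset.erase_insert (h₀ _ hp.1.1)]
      have f2 : q.1 = q.2.erase x := by rw [e2, Finset.erase_insert (h₀ _ hq.1.1)]
      exact Prod.ext (by rw [f1, f2, hpq]) hpq

lemma cross_card_le' {x : α} (S₁ S₀ : Finset (Finset α))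
    (h₁ : ∀ B ∈ S₁, x ∈ B) (h₀ : ∀ A ∈ S₀, x ∉ A) :
    ((S₁ ×ˢ S₀).filter fun p => cubeAdj p.1 p.2).card ≤ min S₀.card S₁.card := by
  have : ((S₁ ×ˢ S₀).filter fun p => cubeAdj p.1 p.2).card
      = ((S₀ ×ˢ S₁).filter fun p => cubeAdj p.1 p.2).card := by
    apply Finset.card_bij (fun p _ => Prod.swap p)
    · intro p hp
      simp only [Finset.mem_filter, Finset.mem_product] at hp ⊢
      exact ⟨⟨hp.1.2, hp.1.1⟩, hp.2.symm⟩
    · intro p _ q _ h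
      exact Prod.swap_injective h
    · intro p hp
      simp only [Finset.mem_filter, Finset.mem_product] at hp
      exact ⟨Prod.swap p, Finset.mem_filter.mpr ⟨Finset.mem_product.mpr ⟨hp.1.2, hp.1.1⟩,
        hp.2.symm⟩, rfl⟩
  rw [this]
  exact cross_card_le S₀ S₁ h₀ h₁

omit [DecidableEq α] in
lemma cubeAdj_symm {A B : Finset α} (h : cubeAdj A B) : cubeAdj B A := h.symm

lemma pairCount_le (S : Finset (Finset α)) :
    (pairCount S : ℝ) ≤ S.card * Real.logb 2 S.card := by
  induction S using Finset.strongInduction with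
  | _ S ih =>
  rcases le_or_gt S.card 1 with hS | hS
  · have hzero : pairCount S = 0 := by
      rw [pairCount, Finset.card_eq_zero, Finset.filter_eq_empty_iff]
      rintro ⟨A, B⟩ hp hadj
      simp only [Finset.mem_product] at hp
      have : A = B := Finset.card_le_one.mp hS A hp.1 B hp.2
      subst this
      rcases hadj with ⟨-, h⟩ | ⟨-, h⟩ <;> simp at h
    rw [hzero]
    interval_cases h : S.card <;> simp
  · obtain ⟨A, hA, B, hB, hAB⟩ := Finset.one_lt_card.mp hS
    obtain ⟨x, hx⟩ := Finset.symmDiff_nonempty.mpr hAB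
    set S₀ := S.filter (fun C => x ∉ C) with hS₀def
    set S₁ := S.filter (fun C => x ∈ C) with hS₁def
    have h₀mem : ∀ C ∈ S₀, x ∉ C := fun C hC => (Finset.mem_filter.mp hC).2
    have h₁mem : ∀ C ∈ S₁, x ∈ C := fun C hC => (Finset.mem_filter.mp hC).2
    have hS₀ne : S₀.Nonempty := by
      rw [Finset.mem_symmDiff] at hx
      rcases hx with ⟨h1, h2⟩ | ⟨h1, h2⟩
      · exact ⟨B, Finset.mem_filter.mpr ⟨hB, h2⟩⟩
      · exact ⟨A, Finset.mem_filter.mpr ⟨hA, h2⟩⟩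
    have hS₁ne : S₁.Nonempty := by
      rw [Finset.mem_symmDiff] at hx
      rcases hx with ⟨h1, h2⟩ | ⟨h1, h2⟩
      · exact ⟨A, Finset.mem_filter.mpr ⟨hA, h1⟩⟩
      · exact ⟨B, Finset.mem_filter.mpr ⟨hB, h1⟩⟩
    have hsum : S₁.card + S₀.card = S.card := by
      rw [hS₀def, hS₁def]
      exact Finset.card_filter_add_card_filter_not _
    have hsub₀ : S₀ ⊂ S := by
      obtain ⟨C, hC⟩ := hS₁ne
      refine (Finset.ssubset_iff_of_subset (Finset.filter_subset _ _)).mpr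
        ⟨C, (Finset.mem_filter.mp hC).1, ?_⟩
      simp only [hS₀def, Finset.mem_filter, not_and, not_not]
      exact fun _ => (Finset.mem_filter.mp hC).2
    have hsub₁ : S₁ ⊂ S := by
      obtain ⟨C, hC⟩ := hS₀ne
      refine (Finset.ssubset_iff_of_subset (Finset.filter_subset _ _)).mpr
        ⟨C, (Finset.mem_filter.mp hC).1, ?_⟩
      simp only [hS₁def, Finset.mem_filter, not_and]
      exact fun _ => (Finset.mem_filter.mp hC).2
    -- decompose the pair count
    have hdecomp : pairCount S ≤ pairCount S₀ + pairCount S₁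
        + 2 * min S₀.card S₁.card := by
      have hsubset : (S ×ˢ S).filter (fun p => cubeAdj p.1 p.2) ⊆
          ((S₀ ×ˢ S₀).filter fun p => cubeAdj p.1 p.2) ∪
          ((S₁ ×ˢ S₁).filter fun p => cubeAdj p.1 p.2) ∪
          ((S₀ ×ˢ S₁).filter fun p => cubeAdj p.1 p.2) ∪
          ((S₁ ×ˢ S₀).filter fun p => cubeAdj p.1 p.2) := by
        intro p hp
        simp only [Finset.mem_filter, Finset.mem_product] at hp
        obtain ⟨⟨hp1, hp2⟩, hadj⟩ := hp
        simp only [Finset.mem_union, Finset.mem_filter, Finset.mem_product,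
          hS₀def, hS₁def]
        by_cases h1 : x ∈ p.1 <;> by_cases h2 : x ∈ p.2 <;> tauto
      calc pairCount S ≤ _ := Finset.card_le_card hsubset
        _ ≤ ((S₀ ×ˢ S₀).filter fun p => cubeAdj p.1 p.2).card +
            ((S₁ ×ˢ S₁).filter fun p => cubeAdj p.1 p.2).card +
            ((S₀ ×ˢ S₁).filter fun p => cubeAdj p.1 p.2).card +
            ((S₁ ×ˢ S₀).filter fun p => cubeAdj p.1 p.2).card := by
          refine le_trans (Finset.card_union_le _ _) ?_
          refine add_le_add ?_ le_rfl
          refine le_trans (Finset.card_union_le _ _) ?_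
          exact add_le_add (Finset.card_union_le _ _) le_rfl
        _ ≤ pairCount S₀ + pairCount S₁ + min S₀.card S₁.card
            + min S₀.card S₁.card := by
          refine add_le_add (add_le_add (add_le_add le_rfl le_rfl) ?_) ?_
          · exact cross_card_le S₀ S₁ h₀mem h₁mem
          · exact cross_card_le' S₁ S₀ h₁mem h₀mem
        _ = pairCount S₀ + pairCount S₁ + 2 * min S₀.card S₁.card := by ring
    have ih₀ := ih S₀ hsub₀
    have ih₁ := ih S₁ hsub₁
    have hkey := key_ineq S₀.card S₁.card
    have hcast : ((S₀.card : ℝ) + S₁.card) = (S.card : ℝ) := by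
      rw [← hsum]; push_cast; ring
    calc (pairCount S : ℝ) ≤ pairCount S₀ + pairCount S₁ + 2 * min S₀.card S₁.card := by
          exact_mod_cast hdecomp
      _ ≤ (S₀.card : ℝ) * Real.logb 2 S₀.card + S₁.card * Real.logb 2 S₁.card
          + 2 * (min S₀.card S₁.card : ℕ) := by
          push_cast
          linarith
      _ ≤ ((S₀.card : ℝ) + S₁.card) * Real.logb 2 ((S₀.card : ℝ) + S₁.card) := hkey
      _ = S.card * Real.logb 2 S.card := by rw [hcast]

end Aux

/-- The hypercube graph `Q_n`: vertices are subsets of `[n]`, adjacent iff one contains the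
other and their sizes differ by one. -/
def hypercube (n : ℕ) : SimpleGraph (Finset (Fin n)) where
  Adj A B := (A ⊆ B ∧ B.card = A.card + 1) ∨ (B ⊆ A ∧ A.card = B.card + 1)
  symm := ⟨fun A B h => h.symm⟩
  loopless := by
    constructor
    intro A h
    rcases h with ⟨-, h⟩ | ⟨-, h⟩ <;> omega

/-- A graph is layered if it is isomorphic to a subgraph of an edge layer of a hypercube. -/
def IsLayered {V : Type*} (G : SimpleGraph V) : Prop :=
  ∃ (n k : ℕ) (f : V → Finset (Fin n)), Function.Injective f ∧
    (∀ v, (f v).card = k ∨ (f v).card + 1 = k) ∧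
    ∀ u v, G.Adj u v → (hypercube n).Adj (f u) (f v)

/-- The number of edges of a graph. -/
noncomputable def numEdges {V : Type*} (G : SimpleGraph V) : ℕ := Nat.card G.edgeSet

/-- Every layered graph on `t` vertices has at most `(1/2)·t·log₂ t·(1+o(1))` edges: for every
`ε > 0` there is `t₀` such that every layered graph on `t ≥ t₀` vertices has at most
`((1+ε)/2)·t·log₂ t` edges. -/
theorem layered_edge_bound (ε : ℝ) (hε : 0 < ε) :
    ∃ t₀ : ℕ, ∀ t : ℕ, t₀ ≤ t → ∀ (V : Type) [Fintype V], ∀ G : SimpleGraph V,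
      Fintype.card V = t → IsLayered G →
      (numEdges G : ℝ) ≤ ((1 + ε) / 2) * t * Real.logb 2 t := by
  classical
  refine ⟨1, ?_⟩
  rintro t ht V _ G hcard ⟨n, k, f, hinj, -, hadj⟩
  set S : Finset (Finset (Fin n)) := Finset.univ.image f with hSdef
  have hScard : S.card = t := by
    rw [hSdef, Finset.card_image_of_injective _ hinj, Finset.card_univ, hcard]
  haveI : DecidableRel G.Adj := Classical.decRel _
  have hE : numEdges G = G.edgeFinset.card := by
    rw [numEdges, Nat.card_eq_fintype_card, SimpleGraph.edgeFinset_card]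
  -- inject darts into adjacent pairs of S
  have hdart : Fintype.card G.Dart ≤ pairCount S := by
    rw [pairCount, ← Finset.card_univ]
    apply Finset.card_le_card_of_injOn (fun d => (f d.toProd.1, f d.toProd.2))
    · intro d _
      refine Finset.mem_filter.mpr ⟨Finset.mem_product.mpr ⟨?_, ?_⟩, ?_⟩
      · exact Finset.mem_image_of_mem f (Finset.mem_univ _)
      · exact Finset.mem_image_of_mem f (Finset.mem_univ _)
      · exact hadj _ _ d.adj
    · intro d _ e _ h
      simp only [Prod.mk.injEq] at h
      exact SimpleGraph.Dart.ext _ _ (Prod.ext (hinj h.1) (hinj h.2))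
  have h2E : 2 * numEdges G ≤ pairCount S := by
    rw [hE, ← SimpleGraph.dart_card_eq_twice_card_edges]
    exact hdart
  have hP := pairCount_le S
  rw [hScard] at hP
  have ht' : (1:ℝ) ≤ t := by exact_mod_cast ht
  have hlogb : 0 ≤ Real.logb 2 t := Real.logb_nonneg one_lt_two ht'
  have h2E' : 2 * (numEdges G : ℝ) ≤ (t : ℝ) * Real.logb 2 t := by
    calc 2 * (numEdges G : ℝ) = ((2 * numEdges G : ℕ) : ℝ) := by push_cast; ring
      _ ≤ (pairCount S : ℝ) := by exact_mod_cast h2E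
      _ ≤ (t : ℝ) * Real.logb 2 t := hP
  have htpos : (0:ℝ) ≤ t := by positivity
  nlinarith [mul_nonneg (mul_nonneg hε.le htpos) hlogb]
end

section
/- Let G be a theta graph with poles a and a' and t legs each of length m, where t > ⌈m/2⌉. If G is embedded as a subgraph of an edge layer of a hypercube, then the Hamming distance between the images of a and a' is strictly less than m. -/
open SimpleGraph

/-- The theta graph with two poles (\`Sum.inl 0\` and \`Sum.inl 1\`) and \`k\` legs, each a
path of length \`m ≥ 2\` with \`m - 1\` internal vertices: leg \`i\` is
\`pole 0, (i,0), (i,1), …, (i,m-2), pole 1\`. -/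
def thetaGraph (k m : ℕ) : SimpleGraph (Fin 2 ⊕ (Fin k × Fin (m - 1))) :=
  SimpleGraph.fromRel (fun x y =>
    match x, y with
    | Sum.inl p, Sum.inr (_, l) => (p = 0 ∧ l.val = 0) ∨ (p = 1 ∧ l.val = m - 2)
    | Sum.inr (i, l), Sum.inr (i', l') => i = i' ∧ l.val + 1 = l'.val
    | _, _ => False)

/-- Adjacent vertices in the hypercube differ in exactly one coordinate. -/
lemma card_symmDiff_of_hyp_adj {n : ℕ} {X Y : Finset (Fin n)}
    (h : (hypercube n).Adj X Y) : (symmDiff X Y).card = 1 := by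
  rcases h with ⟨hsub, hc⟩ | ⟨hsub, hc⟩
  · have h1 : X \ Y = ∅ := Finset.sdiff_eq_empty_iff_subset.mpr hsub
    have : symmDiff X Y = Y \ X := by
      rw [symmDiff_def, h1]; simp
    rw [this, Finset.card_sdiff_of_subset hsub]; omega
  · have h1 : Y \ X = ∅ := Finset.sdiff_eq_empty_iff_subset.mpr hsub
    have : symmDiff X Y = X \ Y := by
      rw [symmDiff_def, h1]; simp
    rw [this, Finset.card_sdiff_of_subset hsub]; omega

/-- Triangle inequality for the Hamming distance. -/
lemma card_symmDiff_triangle {n : ℕ} (X Y Z : Finset (Fin n)) :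
    (symmDiff X Z).card ≤ (symmDiff X Y).card + (symmDiff Y Z).card :=
  le_trans (Finset.card_le_card (symmDiff_triangle X Y Z)) (Finset.card_union_le _ _)

/-- If the theta graph with `t` legs of length `m` each, `t > ⌈m/2⌉`, is embedded in an
edge layer of a hypercube (injectively, preserving adjacency, with all vertices of size `k`
or `k-1`), then the Hamming distance between the images of the two poles is less than
`m`. -/
theorem theta_poles_close (t m n k : ℕ) (hm : 2 ≤ m) (ht : (m + 1) / 2 < t)
    (f : Fin 2 ⊕ (Fin t × Fin (m - 1)) → Finset (Fin n))
    (hinj : Function.Injective f)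
    (hcard : ∀ v, (f v).card = k ∨ (f v).card + 1 = k)
    (hadj : ∀ u v, (thetaGraph t m).Adj u v → (hypercube n).Adj (f u) (f v)) :
    (symmDiff (f (Sum.inl 0)) (f (Sum.inl 1))).card < m := by
  by_contra hcon
  push_neg at hcon
  set A := f (Sum.inl 0) with hA
  set A' := f (Sum.inl 1) with hA'
  -- index of the first internal vertex of each leg
  have h0m : 0 < m - 1 := by omega
  set j0 : Fin (m - 1) := ⟨0, h0m⟩ with hj0
  -- distance from an internal vertex to A'
  have hw : ∀ (i : Fin t) (d : ℕ) (j : Fin (m - 1)), j.val + d = m - 2 →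
      (symmDiff (f (Sum.inr (i, j))) A').card ≤ d + 1 := by
    intro i d
    induction d with
    | zero =>
      intro j hj
      have hadj' : (thetaGraph t m).Adj (Sum.inr (i, j)) (Sum.inl 1) := by
        rw [thetaGraph, SimpleGraph.fromRel_adj]
        exact ⟨by simp, Or.inr (Or.inr ⟨rfl, by omega⟩)⟩
      exact le_of_eq (card_symmDiff_of_hyp_adj (hadj _ _ hadj'))
    | succ d ih =>
      intro j hj
      have hlt : j.val + 1 < m - 1 := by omega
      set j' : Fin (m - 1) := ⟨j.val + 1, hlt⟩ with hj'
      have hadj' : (thetaGraph t m).Adj (Sum.inr (i, j)) (Sum.inr (i, j')) := by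
        rw [thetaGraph, SimpleGraph.fromRel_adj]
        refine ⟨?_, Or.inl ⟨rfl, rfl⟩⟩
        simp only [ne_eq, Sum.inr.injEq, Prod.mk.injEq]
        intro ⟨_, h2⟩
        have := congrArg Fin.val h2
        simp [hj'] at this
      have h1 : (symmDiff (f (Sum.inr (i, j))) (f (Sum.inr (i, j')))).card = 1 :=
        card_symmDiff_of_hyp_adj (hadj _ _ hadj')
      have h2 := ih j' (by simp [hj']; omega)
      have h3 := card_symmDiff_triangle (f (Sum.inr (i, j))) (f (Sum.inr (i, j'))) A'
      omega
  -- distance from the first internal vertex of each leg to A' is ≤ m - 1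
  have hw0 : ∀ i : Fin t, (symmDiff (f (Sum.inr (i, j0))) A').card ≤ m - 1 := by
    intro i
    have := hw i (m - 2) j0 (by simp [hj0])
    omega
  -- A is adjacent to the first internal vertex of each leg
  have hAadj : ∀ i : Fin t, (hypercube n).Adj A (f (Sum.inr (i, j0))) := by
    intro i
    apply hadj
    rw [thetaGraph, SimpleGraph.fromRel_adj]
    exact ⟨by simp, Or.inl (Or.inl ⟨rfl, rfl⟩)⟩
  have hA1 : ∀ i : Fin t, (symmDiff A (f (Sum.inr (i, j0)))).card = 1 :=
    fun i => card_symmDiff_of_hyp_adj (hAadj i)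
  -- hence D.card = m exactly
  have hDm : (symmDiff A A').card = m := by
    have h3 := card_symmDiff_triangle A (f (Sum.inr (⟨0, by omega⟩, j0))) A'
    have := hA1 ⟨0, by omega⟩
    have := hw0 ⟨0, by omega⟩
    omega
  -- extract the toggled element of each leg
  have hx : ∀ i : Fin t, ∃ x : Fin n, symmDiff A (f (Sum.inr (i, j0))) = {x} :=
    fun i => Finset.card_eq_one.mp (hA1 i)
  choose x hxs using hx
  have hweq : ∀ i : Fin t, f (Sum.inr (i, j0)) = symmDiff A {x i} := by
    intro i
    rw [← hxs i, symmDiff_symmDiff_cancel_left]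
  -- each x i lies in D
  have hxD : ∀ i : Fin t, x i ∈ symmDiff A A' := by
    intro i
    by_contra hxi
    have hdisj : Disjoint (symmDiff A A') ({x i} : Finset (Fin n)) :=
      Finset.disjoint_singleton_right.mpr hxi
    have heq : symmDiff (f (Sum.inr (i, j0))) A'
        = symmDiff (symmDiff A A') ({x i} : Finset (Fin n)) := by
      rw [hweq i]
      exact symmDiff_right_comm A {x i} A'
    have : (symmDiff (symmDiff A A') ({x i} : Finset (Fin n))).card = m + 1 := by
      rw [hdisj.symmDiff_eq_sup]
      rw [Finset.sup_eq_union, Finset.card_union_of_disjoint hdisj, hDm]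
      simp
    have := hw0 i
    rw [heq] at this
    omega
  -- the x i are pairwise distinct
  have hxinj : Function.Injective x := by
    intro i j hij
    have : f (Sum.inr (i, j0)) = f (Sum.inr (j, j0)) := by
      rw [hweq i, hweq j, hij]
    have h := hinj this
    simp only [Sum.inr.injEq, Prod.mk.injEq] at h
    exact h.1
  -- membership of x i in the symmetric difference of A and the first internal vertex
  have hxmem : ∀ i : Fin t, x i ∈ symmDiff A (f (Sum.inr (i, j0))) := by
    intro i; rw [hxs i]; exact Finset.mem_singleton_self _
  -- cardinality bookkeeping
  have hcA := hcard (Sum.inl 0)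
  have hcA' := hcard (Sum.inl 1)
  have hsd : (symmDiff A A').card = (A \ A').card + (A' \ A).card := by
    have hdisj : Disjoint (A \ A') (A' \ A) := disjoint_sdiff_sdiff
    rw [symmDiff_def, Finset.sup_eq_union, Finset.card_union_of_disjoint hdisj]
  have hc1 := Finset.card_sdiff_add_card_inter A A'
  have hc2 := Finset.card_sdiff_add_card_inter A' A
  rw [Finset.inter_comm A' A] at hc2
  rw [← hA] at hcA
  rw [← hA'] at hcA'
  rcases hcA with hAk | hAk
  · -- |A| = k : every leg starts by deleting an element of A \ A'
    have hxAA' : ∀ i : Fin t, x i ∈ A \ A' := by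
      intro i
      have hcw := hcard (Sum.inr (i, j0))
      have hsub : f (Sum.inr (i, j0)) ⊆ A := by
        rcases hAadj i with ⟨_, hc⟩ | ⟨hs, _⟩
        · exfalso; omega
        · exact hs
      have hxA : x i ∈ A := by
        rcases Finset.mem_symmDiff.mp (hxmem i) with ⟨h1, _⟩ | ⟨h1, _⟩
        · exact h1
        · exact hsub h1
      have hxA' : x i ∉ A' := by
        rcases Finset.mem_symmDiff.mp (hxD i) with ⟨_, h2⟩ | ⟨_, h2⟩
        · exact h2
        · exact absurd hxA h2
      exact Finset.mem_sdiff.mpr ⟨hxA, hxA'⟩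
    have htle : t ≤ (A \ A').card := by
      have := Finset.card_le_card_of_injOn (s := (Finset.univ : Finset (Fin t))) x (fun i _ => hxAA' i) hxinj.injOn
      simpa using this
    omega
  · -- |A| = k - 1 : every leg starts by adding an element of A' \ A
    have hxAA' : ∀ i : Fin t, x i ∈ A' \ A := by
      intro i
      have hcw := hcard (Sum.inr (i, j0))
      have hsub : A ⊆ f (Sum.inr (i, j0)) := by
        rcases hAadj i with ⟨hs, _⟩ | ⟨_, hc⟩
        · exact hs
        · exfalso; omega
      have hxnA : x i ∉ A := by
        rcases Finset.mem_symmDiff.mp (hxmem i) with ⟨h1, h2⟩ | ⟨_, h2⟩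
        · exact absurd (hsub h1) h2
        · exact h2
      have hxA' : x i ∈ A' := by
        rcases Finset.mem_symmDiff.mp (hxD i) with ⟨h1, _⟩ | ⟨h1, _⟩
        · exact absurd h1 hxnA
        · exact h1
      exact Finset.mem_sdiff.mpr ⟨hxA', hxnA⟩
    have htle : t ≤ (A' \ A).card := by
      have := Finset.card_le_card_of_injOn (s := (Finset.univ : Finset (Fin t))) x (fun i _ => hxAA' i) hxinj.injOn
      simpa using this
    omega
end

section
/- There exists a cubical graph of girth 8 that is not layered. Concretely, let G'_8 be the theta graph with poles a, a' and three legs of length 4, let u be the neighbor of a on one leg and u' the neighbor of a' on another leg, and let G_8 be the union of G'_8 with a path of length 4 between u and u' internally disjoint from G'_8; then G_8 is cubical, has girth 8, and is not layered. -/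
open SimpleGraph

/-- `G` contains a copy of `H`, i.e. `H` is isomorphic to a subgraph of `G`. -/
def ContainsCopy {α β : Type*} (G : SimpleGraph α) (H : SimpleGraph β) : Prop :=
  ∃ f : β → α, Function.Injective f ∧ ∀ u v, H.Adj u v → G.Adj (f u) (f v)

/-- A graph is cubical if it is isomorphic to a subgraph of a hypercube. -/
def IsCubical {V : Type*} (G : SimpleGraph V) : Prop :=
  ∃ n : ℕ, ContainsCopy (hypercube n) G

/-- The graph `G_8`: the theta graph `G'_8` with poles `a, a'` and three legs of length
4, where `u = (0,0)` is the neighbor of `a` on leg 0 and `u' = (1,2)` is the neighbor of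
`a'` on leg 1, together with a path `u, q₀, q₁, q₂, u'` of length 4 internally disjoint
from `G'_8`. -/
def G8 : SimpleGraph ((Fin 2 ⊕ (Fin 3 × Fin 3)) ⊕ Fin 3) :=
  SimpleGraph.fromRel (fun x y =>
    match x, y with
    | Sum.inl a, Sum.inl b => (thetaGraph 3 4).Adj a b
    | Sum.inl (Sum.inr (i, l)), Sum.inr j =>
        (i = 0 ∧ l = 0 ∧ j = 0) ∨ (i = 1 ∧ l = 2 ∧ j = 2)
    | Sum.inr j, Sum.inr j' => j.val + 1 = j'.val
    | _, _ => False)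

instance thetaDec : DecidableRel (thetaGraph 3 4).Adj := fun a b => by
  rcases a with p|⟨i,l⟩ <;> rcases b with q|⟨i',l'⟩ <;>
    exact decidable_of_iff _ (SimpleGraph.fromRel_adj _ _ _).symm

instance g8Dec : DecidableRel G8.Adj := fun a b => by
  rcases a with (p|⟨i,l⟩)|j <;> rcases b with (q|⟨i',l'⟩)|j' <;>
    exact decidable_of_iff _ (SimpleGraph.fromRel_adj _ _ _).symm


instance hcDec (n : ℕ) : DecidableRel (hypercube n).Adj := fun A B =>
  inferInstanceAs (Decidable ((A ⊆ B ∧ B.card = A.card + 1) ∨ (B ⊆ A ∧ A.card = B.card + 1)))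

abbrev V8 := (Fin 2 ⊕ (Fin 3 × Fin 3)) ⊕ Fin 3

def F8 : V8 → Finset (Fin 5)
  | Sum.inl (Sum.inl 0) => {}
  | Sum.inl (Sum.inl 1) => {0,1,2,3}
  | Sum.inl (Sum.inr (0, 0)) => {0}
  | Sum.inl (Sum.inr (0, 1)) => {0,1}
  | Sum.inl (Sum.inr (0, 2)) => {0,1,2}
  | Sum.inl (Sum.inr (1, 0)) => {2}
  | Sum.inl (Sum.inr (1, 1)) => {2,3}
  | Sum.inl (Sum.inr (1, 2)) => {0,2,3}
  | Sum.inl (Sum.inr (2, 0)) => {1}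
  | Sum.inl (Sum.inr (2, 1)) => {1,3}
  | Sum.inl (Sum.inr (2, 2)) => {1,2,3}
  | Sum.inr 0 => {0,4}
  | Sum.inr 1 => {0,3,4}
  | Sum.inr 2 => {0,3}

instance : BEq V8 := instBEqOfDecidableEq
def allV : List V8 :=
  [Sum.inl (Sum.inl 0), Sum.inl (Sum.inl 1),
   Sum.inl (Sum.inr (0,0)), Sum.inl (Sum.inr (0,1)), Sum.inl (Sum.inr (0,2)),
   Sum.inl (Sum.inr (1,0)), Sum.inl (Sum.inr (1,1)), Sum.inl (Sum.inr (1,2)),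
   Sum.inl (Sum.inr (2,0)), Sum.inl (Sum.inr (2,1)), Sum.inl (Sum.inr (2,2)),
   Sum.inr 0, Sum.inr 1, Sum.inr 2]

lemma mem_allV : ∀ v : V8, v ∈ allV := by decide

def nbrList (v : V8) : List V8 := allV.filter (fun w => decide (G8.Adj v w))

lemma mem_nbrList {v w : V8} : w ∈ nbrList v ↔ G8.Adj v w := by
  simp [nbrList, mem_allV]

def pexts (p : List V8) : List (List V8) :=
  (nbrList p.headI).filterMap (fun w => if w ∈ p then none else some (w :: p))

def pathsN : ℕ → V8 → List (List V8)
  | 0, v => [[v]]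
  | n+1, v => (pathsN n v).flatMap pexts

lemma walk_mem_pathsN : ∀ {u v : V8} (w : G8.Walk u v), w.support.Nodup →
    w.support ∈ pathsN w.length v := by
  intro u v w
  induction w with
  | nil => intro _; simp [pathsN]
  | @cons a x v h w ih =>
    intro hnd
    rw [SimpleGraph.Walk.support_cons] at hnd ⊢
    rw [List.nodup_cons] at hnd
    have hmem := ih hnd.2
    rw [SimpleGraph.Walk.length_cons]
    show _ ∈ pathsN (w.length + 1) v
    rw [pathsN, List.mem_flatMap]
    refine ⟨w.support, hmem, ?_⟩
    rw [pexts, List.mem_filterMap]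
    refine ⟨a, ?_, ?_⟩
    · rw [mem_nbrList]
      have hh : w.support.headI = x := by rw [w.support_eq_cons]; rfl
      rw [hh]
      exact h.symm
    · rw [if_neg hnd.1]

def noCycB (n : ℕ) : Bool :=
  allV.all (fun v => (pathsN n v).all (fun p => !decide (G8.Adj v p.headI)))

lemma noCyc {n : ℕ} (h : noCycB n = true) :
    ∀ v : V8, ∀ p ∈ pathsN n v, ¬ G8.Adj v p.headI := by
  intro v p hp
  rw [noCycB, List.all_eq_true] at h
  have := h v (mem_allV v)
  rw [List.all_eq_true] at this
  have := this p hp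
  simpa using this

lemma cycle_ge8 : ∀ (v : V8) (w : G8.Walk v v), w.IsCycle → 8 ≤ w.length := by
  intro v w hw
  by_contra hlt
  push_neg at hlt
  have h3 := hw.three_le_length
  cases w with
  | nil => simp at h3
  | @cons a x v h w' =>
    have hnd : w'.support.Nodup := by
      have h' := hw.support_nodup
      rwa [SimpleGraph.Walk.support_cons, List.tail_cons] at h'
    have hmem := walk_mem_pathsN w' hnd
    rw [SimpleGraph.Walk.length_cons] at hlt h3
    have hb : noCycB w'.length = true := by
      have h1 : 2 ≤ w'.length := by omega
      have h2 : w'.length ≤ 6 := by omega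
      interval_cases h : w'.length <;> decide
    refine noCyc hb v w'.support hmem ?_
    have hh : w'.support.headI = x := by rw [w'.support_eq_cons]; rfl
    rw [hh]
    exact h

def w8 : G8.Walk (Sum.inl (Sum.inl 0)) (Sum.inl (Sum.inl 0)) :=
  .cons (v := Sum.inl (Sum.inr (0,0))) (by decide) <|
  .cons (v := Sum.inl (Sum.inr (0,1))) (by decide) <|
  .cons (v := Sum.inl (Sum.inr (0,2))) (by decide) <|
  .cons (v := Sum.inl (Sum.inl 1)) (by decide) <|
  .cons (v := Sum.inl (Sum.inr (1,2))) (by decide) <|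
  .cons (v := Sum.inl (Sum.inr (1,1))) (by decide) <|
  .cons (v := Sum.inl (Sum.inr (1,0))) (by decide) <|
  .cons (v := Sum.inl (Sum.inl 0)) (by decide) .nil

lemma w8_cycle : w8.IsCycle := ⟨⟨⟨by decide⟩, by simp [w8]⟩, by decide⟩

lemma girth_eq : G8.girth = 8 := by
  have hcyc := w8_cycle
  have hub : G8.egirth ≤ 8 := by
    have : G8.egirth ≤ (w8.length : ℕ∞) := by
      show (⨅ a, ⨅ w : G8.Walk a a, ⨅ _ : w.IsCycle, (w.length : ℕ∞)) ≤ _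
      exact iInf_le_of_le _ (iInf_le_of_le w8 (iInf_le _ hcyc))
    simpa [w8] using this
  have hlb : (8 : ℕ∞) ≤ G8.egirth := by
    rw [SimpleGraph.le_egirth]
    intro a w hw
    exact_mod_cast cycle_ge8 a w hw
  have : G8.egirth = 8 := le_antisymm hub hlb
  rw [SimpleGraph.girth, this]
  rfl

/-! ### Not layered -/

lemma insert_ext {n : ℕ} {A B : Finset (Fin n)} (h : A ⊆ B) (hc : B.card = A.card + 1) :
    ∃ x, x ∉ A ∧ B = insert x A := by
  have h1 : (B \ A).card = 1 := by rw [Finset.card_sdiff_of_subset h]; omega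
  obtain ⟨x, hx⟩ := Finset.card_eq_one.mp h1
  have hxB : x ∈ B \ A := hx ▸ Finset.mem_singleton_self x
  refine ⟨x, (Finset.mem_sdiff.mp hxB).2, ?_⟩
  rw [Finset.insert_eq, ← hx, Finset.union_comm, Finset.union_sdiff_of_subset h]

lemma go_up {n k : ℕ} {A B : Finset (Fin n)} (h : (hypercube n).Adj A B)
    (hA : A.card + 1 = k) (hB : B.card = k ∨ B.card + 1 = k) :
    (∃ x, x ∉ A ∧ B = insert x A) ∧ B.card = k := by
  rcases h with ⟨hsub, hc⟩ | ⟨hsub, hc⟩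
  · exact ⟨insert_ext hsub hc, by omega⟩
  · exfalso; omega

lemma go_down {n k : ℕ} {A B : Finset (Fin n)} (h : (hypercube n).Adj A B)
    (hA : A.card = k) (hB : B.card = k ∨ B.card + 1 = k) :
    (∃ x, x ∉ B ∧ A = insert x B) ∧ B.card + 1 = k := by
  rcases h with ⟨hsub, hc⟩ | ⟨hsub, hc⟩
  · exfalso; omega
  · exact ⟨insert_ext hsub hc, by omega⟩

lemma legLemma {n : ℕ} {S T A B C : Finset (Fin n)}
    (hBS : B ≠ S) (hTB : T ≠ B) (hCA : C ≠ A)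
    (hA : ∃ x, x ∉ S ∧ A = insert x S)
    (hB : ∃ y, y ∉ B ∧ A = insert y B)
    (hC : ∃ z, z ∉ B ∧ C = insert z B)
    (hT : ∃ w, w ∉ T ∧ C = insert w T) :
    ∃ x y z, x ∉ S ∧ y ∈ S ∧ x ≠ y ∧ z ∉ S ∧ z ≠ x ∧ z ≠ y ∧
      A = insert x S ∧ B = insert x (S.erase y) ∧
      z ∈ T ∧ (∀ t ∈ T, t ∉ S → t = x ∨ t = z) ∧
      (x ∉ T → C = insert x T ∧ T = insert z (S.erase y)) := by
  obtain ⟨x, hxS, hAx⟩ := hA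
  obtain ⟨y, hyB, hAy⟩ := hB
  obtain ⟨z, hzB, hCz⟩ := hC
  obtain ⟨w, hwT, hCw⟩ := hT
  have hBA : B = A.erase y := by rw [hAy, Finset.erase_insert hyB]
  have hxy : x ≠ y := by
    rintro rfl
    exact hBS (by rw [hBA, hAx, Finset.erase_insert hxS])
  have hyS : y ∈ S := by
    have hyA : y ∈ insert x S := by rw [← hAx, hAy]; exact Finset.mem_insert_self y B
    rcases Finset.mem_insert.mp hyA with h | h
    · exact absurd h.symm hxy
    · exact h
  have hBeq : B = insert x (S.erase y) := by
    rw [hBA, hAx, Finset.erase_insert_of_ne hxy]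
  have hxB : x ∈ B := by rw [hBeq]; exact Finset.mem_insert_self x (S.erase y)
  have hzx : z ≠ x := fun h => hzB (h ▸ hxB)
  have hzy : z ≠ y := by
    rintro rfl
    exact hCA (by rw [hCz, ← hAy])
  have hzS : z ∉ S := by
    intro hz
    apply hzB
    rw [hBeq]
    exact Finset.mem_insert_of_mem (Finset.mem_erase.mpr ⟨hzy, hz⟩)
  have hzw : z ≠ w := by
    rintro rfl
    apply hTB
    have : T = C.erase z := by rw [hCw, Finset.erase_insert hwT]
    rw [this, hCz, Finset.erase_insert hzB]
  have hzT : z ∈ T := by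
    have : z ∈ insert w T := by rw [← hCw, hCz]; exact Finset.mem_insert_self z B
    rcases Finset.mem_insert.mp this with h | h
    · exact absurd h hzw
    · exact h
  refine ⟨x, y, z, hxS, hyS, hxy, hzS, hzx, hzy, hAx, hBeq, hzT, ?_, ?_⟩
  · intro t htT htS
    have : t ∈ C := by rw [hCw]; exact Finset.mem_insert_of_mem htT
    rw [hCz, hBeq] at this
    rcases Finset.mem_insert.mp this with h | h
    · exact Or.inr h
    · rcases Finset.mem_insert.mp h with h' | h'
      · exact Or.inl h'
      · exact absurd (Finset.mem_of_mem_erase h') htS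
  · intro hxT
    have hxC : x ∈ C := by rw [hCz]; exact Finset.mem_insert_of_mem hxB
    have hwx : w = x := by
      rw [hCw] at hxC
      rcases Finset.mem_insert.mp hxC with h | h
      · exact h.symm
      · exact absurd h hxT
    have hCx : C = insert x T := by rw [hCw, hwx]
    refine ⟨hCx, ?_⟩
    have hT' : T = C.erase x := by rw [hCx, Finset.erase_insert (hwx ▸ hwT)]
    rw [hT', hCz, hBeq, Finset.erase_insert_of_ne hzx,
      Finset.erase_insert (fun h => hxS (Finset.mem_of_mem_erase h))]

def vA : V8 := Sum.inl (Sum.inl 0)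
def vA' : V8 := Sum.inl (Sum.inl 1)
def vL (i j : Fin 3) : V8 := Sum.inl (Sum.inr (i,j))
def vQ (j : Fin 3) : V8 := Sum.inr j

lemma mainLayer {n k : ℕ} {f : V8 → Finset (Fin n)} (finj : Function.Injective f)
    (hcard : ∀ v, (f v).card = k ∨ (f v).card + 1 = k)
    (hadj : ∀ u v, G8.Adj u v → (hypercube n).Adj (f u) (f v))
    (hk : (f vA).card + 1 = k) : False := by
  have ineq : ∀ u v : V8, u ≠ v → f u ≠ f v := fun u v h he => h (finj he)
  have adj1 : ∀ i : Fin 3, G8.Adj vA (vL i 0) := by decide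
  have adj2 : ∀ i : Fin 3, G8.Adj (vL i 0) (vL i 1) := by decide
  have adj3 : ∀ i : Fin 3, G8.Adj (vL i 1) (vL i 2) := by decide
  have adj4 : ∀ i : Fin 3, G8.Adj (vL i 2) vA' := by decide
  have E1 := fun i => go_up (hadj _ _ (adj1 i)) hk (hcard (vL i 0))
  have E2 := fun i => go_down (hadj _ _ (adj2 i)) (E1 i).2 (hcard (vL i 1))
  have E3 := fun i => go_up (hadj _ _ (adj3 i)) (E2 i).2 (hcard (vL i 2))
  have E4 := fun i => go_down (hadj _ _ (adj4 i)) (E3 i).2 (hcard vA')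
  have d1 : ∀ i : Fin 3, vL i 1 ≠ vA := by decide
  have d2 : ∀ i : Fin 3, vA' ≠ vL i 1 := by decide
  have d3 : ∀ i : Fin 3, vL i 2 ≠ vL i 0 := by decide
  have legF := fun i => legLemma (ineq _ _ (d1 i)) (ineq _ _ (d2 i)) (ineq _ _ (d3 i))
      (E1 i).1 (E2 i).1 (E3 i).1 (E4 i).1
  obtain ⟨x0, y0, z0, hx0S, hy0S, hx0y0, hz0S, hz0x0, hz0y0, hA0, hB0, hz0T, hTsub0, hcond0⟩ :=
    legF 0
  obtain ⟨x1, y1, z1, hx1S, hy1S, hx1y1, hz1S, hz1x1, hz1y1, hA1, hB1, hz1T, hTsub1, hcond1⟩ :=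
    legF 1
  obtain ⟨x2, y2, z2, hx2S, hy2S, hx2y2, hz2S, hz2x2, hz2y2, hA2, hB2, hz2T, hTsub2, hcond2⟩ :=
    legF 2
  have xd01 : x0 ≠ x1 := by
    rintro rfl
    exact ineq _ _ (by decide : vL 0 0 ≠ vL 1 0) (by rw [hA0, hA1])
  have xd02 : x0 ≠ x2 := by
    rintro rfl
    exact ineq _ _ (by decide : vL 0 0 ≠ vL 2 0) (by rw [hA0, hA2])
  have xd12 : x1 ≠ x2 := by
    rintro rfl
    exact ineq _ _ (by decide : vL 1 0 ≠ vL 2 0) (by rw [hA1, hA2])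
  have hx0T : x0 ∉ f vA' := by
    intro hmem
    have e1 : x0 = z1 := (hTsub1 x0 hmem hx0S).resolve_left xd01
    have e2 : x0 = z2 := (hTsub2 x0 hmem hx0S).resolve_left xd02
    have f1 : z0 = x1 := by
      rcases hTsub1 z0 hz0T hz0S with h | h
      · exact h
      · exact absurd (h.trans e1.symm) hz0x0
    have f2 : z0 = x2 := by
      rcases hTsub2 z0 hz0T hz0S with h | h
      · exact h
      · exact absurd (h.trans e2.symm) hz0x0
    exact xd12 (f1.symm.trans f2)
  have hx1T : x1 ∉ f vA' := by
    intro hmem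
    have e1 : x1 = z0 := (hTsub0 x1 hmem hx1S).resolve_left (Ne.symm xd01)
    have e2 : x1 = z2 := (hTsub2 x1 hmem hx1S).resolve_left xd12
    have f1 : z1 = x0 := by
      rcases hTsub0 z1 hz1T hz1S with h | h
      · exact h
      · exact absurd (h.trans e1.symm) hz1x1
    have f2 : z1 = x2 := by
      rcases hTsub2 z1 hz1T hz1S with h | h
      · exact h
      · exact absurd (h.trans e2.symm) hz1x1
    exact xd02 (f1.symm.trans f2)
  obtain ⟨hC1eq, hTeq1⟩ := hcond1 hx1T
  obtain ⟨-, hTeq0⟩ := hcond0 hx0T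
  have hy0T : y0 ∉ f vA' := by
    rw [hTeq0]
    intro h
    rcases Finset.mem_insert.mp h with h | h
    · exact hz0y0 h.symm
    · exact Finset.notMem_erase _ _ h
  have hx0u' : x0 ∉ f (vL 1 2) := by
    rw [hC1eq]
    intro h
    rcases Finset.mem_insert.mp h with h | h
    · exact xd01 h
    · exact hx0T h
  have hy0u' : y0 ∉ f (vL 1 2) := by
    rw [hC1eq]
    intro h
    rcases Finset.mem_insert.mp h with h | h
    · exact hx1S (h ▸ hy0S)
    · exact hy0T h
  have P1 := go_down (hadj _ _ (by decide : G8.Adj (vL 0 0) (vQ 0))) (E1 0).2 (hcard (vQ 0))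
  have P2 := go_up (hadj _ _ (by decide : G8.Adj (vQ 0) (vQ 1))) P1.2 (hcard (vQ 1))
  have P3 := go_down (hadj _ _ (by decide : G8.Adj (vQ 1) (vQ 2))) P2.2 (hcard (vQ 2))
  have P4 := go_down (hadj _ _ (by decide : G8.Adj (vL 1 2) (vQ 2))) (E3 1).2 (hcard (vQ 2))
  obtain ⟨α, hαQ, hαeq⟩ := P1.1
  have hQ0 : f (vQ 0) = (insert x0 (f vA)).erase α := by
    rw [← hA0, hαeq, Finset.erase_insert hαQ]
  by_cases hα1 : α = x0
  · apply ineq (vQ 0) vA (by decide)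
    rw [hQ0, hα1, Finset.erase_insert hx0S]
  by_cases hα2 : α = y0
  · apply ineq (vQ 0) (vL 0 1) (by decide)
    rw [hQ0, hα2, Finset.erase_insert_of_ne hx0y0, ← hB0]
  have hx0Q0 : x0 ∈ f (vQ 0) := by
    rw [hQ0]
    exact Finset.mem_erase.mpr ⟨fun h => hα1 h.symm, Finset.mem_insert_self _ _⟩
  have hy0Q0 : y0 ∈ f (vQ 0) := by
    rw [hQ0]
    exact Finset.mem_erase.mpr ⟨fun h => hα2 h.symm, Finset.mem_insert_of_mem hy0S⟩
  obtain ⟨β, hβ, hQ1eq⟩ := P2.1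
  have hx0Q1 : x0 ∈ f (vQ 1) := by rw [hQ1eq]; exact Finset.mem_insert_of_mem hx0Q0
  have hy0Q1 : y0 ∈ f (vQ 1) := by rw [hQ1eq]; exact Finset.mem_insert_of_mem hy0Q0
  obtain ⟨γ, hγ, hQ1eq'⟩ := P3.1
  obtain ⟨δ, hδ, hC1eq'⟩ := P4.1
  by_cases hγx : γ = x0
  · have hy2 : y0 ∈ f (vQ 2) := by
      have h' : y0 ∈ insert γ (f (vQ 2)) := hQ1eq' ▸ hy0Q1
      rcases Finset.mem_insert.mp h' with h | h
      · exact absurd (h.trans hγx) (fun he => hx0y0 he.symm)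
      · exact h
    exact hy0u' (hC1eq' ▸ Finset.mem_insert_of_mem hy2)
  · have hx2' : x0 ∈ f (vQ 2) := by
      have h' : x0 ∈ insert γ (f (vQ 2)) := hQ1eq' ▸ hx0Q1
      rcases Finset.mem_insert.mp h' with h | h
      · exact absurd h.symm hγx
      · exact h
    exact hx0u' (hC1eq' ▸ Finset.mem_insert_of_mem hx2')

/-- `G_8` is a cubical graph of girth 8 that is not layered. -/
theorem G8_cubical_girth8_not_layered :
    IsCubical G8 ∧ G8.girth = 8 ∧ ¬ IsLayered G8 := by
  refine ⟨⟨5, F8, by decide, by decide⟩, girth_eq, ?_⟩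
  rintro ⟨n, k, f, finj, hcard, hadj⟩
  have hle : ∀ v, (f v).card ≤ n := fun v => by
    simpa using Finset.card_le_card (Finset.subset_univ (f v))
  rcases hcard vA with h | h
  · -- `f vA` is at the top level; pass to complements
    have hkn : k ≤ n := h ▸ hle vA
    refine mainLayer (f := fun v => (f v)ᶜ) (k := n - k + 1)
        (fun u v huv => finj (by simpa using congrArg (·ᶜ) huv)) ?_ ?_ ?_
    · intro v
      simp only [Finset.card_compl, Fintype.card_fin]
      have := hle v
      rcases hcard v with h' | h'
      · right; omega
      · left; omega
    · intro u v huv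
      have h2 := hadj u v huv
      have h3 := hle u
      have h4 := hle v
      rcases h2 with ⟨hs, hc⟩ | ⟨hs, hc⟩
      · refine Or.inr ⟨Finset.compl_subset_compl.mpr hs, ?_⟩
        simp only [Finset.card_compl, Fintype.card_fin]
        omega
      · refine Or.inl ⟨Finset.compl_subset_compl.mpr hs, ?_⟩
        simp only [Finset.card_compl, Fintype.card_fin]
        omega
    · simp only [Finset.card_compl, Fintype.card_fin]
      omega
  · exact mainLayer finj hcard hadj h
end
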